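/- Let u : ℝ³ → ℝ be continuous in all variables and locally Lipschitz in (q,p), and let (q(t), p(t)) be a solution of the system q̇ = p, ṗ = u(q,p,t)·sin q − cos q defined on a neighborhood of t₀. If q(t₀) = 0 and p(t₀) = 0, then q̈(t₀) = −1; consequently there exists δ > 0 such that q(t) < 0 for all t with 0 < |t − t₀| ≤ δ (the trajectory is externally tangent to the region {0 ≤ q ≤ π} at this point). Similarly, if q(t₀) = π and p(t₀) = 0, then q̈(t₀) = 1 and there exists δ > 0 such that q(t) > π for all t with 0 < |t − t₀| ≤ δ. -/

import Mathlib

open Real Set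

lemma pendulum_aux (t₀ ε : ℝ) (hε : 0 < ε) (q p : ℝ → ℝ)
    (hq : ∀ t ∈ Ioo (t₀ - ε) (t₀ + ε), HasDerivAt q (p t) t)
    (hp0 : p t₀ = 0) (c : ℝ) (hc : c < 0) (hpd : HasDerivAt p c t₀) :
    ∃ δ > 0, ∀ t : ℝ, 0 < |t - t₀| → |t - t₀| ≤ δ → q t < q t₀ := by
  have hslope : ∀ᶠ x in nhdsWithin t₀ {t₀}ᶜ, slope p t₀ x < 0 :=
    (hasDerivAt_iff_tendsto_slope.mp hpd).eventually_lt_const hc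
  rw [Metric.nhdsWithin_basis_ball.eventually_iff] at hslope
  obtain ⟨δ₁, hδ₁, hball⟩ := hslope
  have hsign : ∀ x : ℝ, x ≠ t₀ → |x - t₀| < δ₁ → p x / (x - t₀) < 0 := by
    intro x hx hdx
    have := hball (⟨by simpa [Metric.mem_ball, Real.dist_eq] using hdx, hx⟩ :
      x ∈ Metric.ball t₀ δ₁ ∩ {t₀}ᶜ)
    rwa [slope_def_field, hp0, sub_zero] at this
  refine ⟨min (δ₁ / 2) (ε / 2), by positivity, fun t ht hts => ?_⟩
  have ht1 : |t - t₀| < δ₁ := lt_of_le_of_lt hts (by nlinarith [min_le_left (δ₁/2) (ε/2)])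
  have ht2 : |t - t₀| ≤ ε / 2 := hts.trans (min_le_right _ _)
  rw [abs_le] at ht2
  have hne : t ≠ t₀ := by
    intro h; rw [h] at ht; simp at ht
  rcases hne.lt_or_gt with hlt | hgt
  · -- t < t₀ : MVT on [t, t₀]
    have hsub : Icc t t₀ ⊆ Ioo (t₀ - ε) (t₀ + ε) := fun x hx =>
      ⟨by nlinarith [hx.1], by nlinarith [hx.2]⟩
    obtain ⟨d, hd, hdeq⟩ := exists_hasDerivAt_eq_slope q p hlt
      (fun x hx => (hq x (hsub hx)).continuousAt.continuousWithinAt)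
      (fun x hx => hq x (hsub (Ioo_subset_Icc_self hx)))
    have hpd' : p d / (d - t₀) < 0 := hsign d hd.2.ne (by
      rw [abs_sub_lt_iff]; constructor <;> nlinarith [hd.1, hd.2, abs_sub_lt_iff.mp ht1])
    have hdlt : d - t₀ < 0 := sub_neg.mpr hd.2
    have hpdpos : 0 < p d := by
      by_contra h
      push_neg at h
      rcases h.lt_or_eq with h | h
      · nlinarith [div_pos_of_neg_of_neg h hdlt]
      · simp [h] at hpd'
    rw [hdeq] at hpdpos
    have : 0 < q t₀ - q t := by
      have := mul_pos hpdpos (sub_pos.mpr hlt)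
      rwa [div_mul_cancel₀] at this
      exact (sub_pos.mpr hlt).ne'
    linarith
  · -- t₀ < t : MVT on [t₀, t]
    have hsub : Icc t₀ t ⊆ Ioo (t₀ - ε) (t₀ + ε) := fun x hx =>
      ⟨by nlinarith [hx.1], by nlinarith [hx.2]⟩
    obtain ⟨d, hd, hdeq⟩ := exists_hasDerivAt_eq_slope q p hgt
      (fun x hx => (hq x (hsub hx)).continuousAt.continuousWithinAt)
      (fun x hx => hq x (hsub (Ioo_subset_Icc_self hx)))
    have hpd' : p d / (d - t₀) < 0 := hsign d hd.1.ne' (by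
      rw [abs_sub_lt_iff]; constructor <;> nlinarith [hd.1, hd.2, abs_sub_lt_iff.mp ht1])
    have hdgt : 0 < d - t₀ := sub_pos.mpr hd.1
    have hpdneg : p d < 0 := by
      by_contra h
      push_neg at h
      rcases h.lt_or_eq with h | h
      · nlinarith [div_pos h hdgt]
      · rw [← h] at hpd'; simp at hpd'
    rw [hdeq] at hpdneg
    have : q t - q t₀ < 0 := by
      have := mul_neg_of_neg_of_pos hpdneg (sub_pos.mpr hgt)
      rwa [div_mul_cancel₀] at this
      exact (sub_pos.mpr hgt).ne'
    linarith

/-- External tangency for the controlled pendulum `q̇ = p, ṗ = u(q,p,t)·sin q − cos q`: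
along any solution defined near `t₀`, if `q(t₀) = 0, p(t₀) = 0` then `q̈(t₀) = −1` and
`q(t) < 0` on a punctured neighborhood of `t₀`; if `q(t₀) = π, p(t₀) = 0` then
`q̈(t₀) = 1` and `q(t) > π` on a punctured neighborhood of `t₀`. -/
theorem inverted_pendulum_external_tangency
    (u : ℝ → ℝ → ℝ → ℝ)
    (hu_cont : Continuous fun x : ℝ × ℝ × ℝ => u x.1 x.2.1 x.2.2)
    (hu_lip : ∀ K : Set (ℝ × ℝ × ℝ), IsCompact K → ∃ L : ℝ,
      ∀ a ∈ K, ∀ b ∈ K, a.2.2 = b.2.2 →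
        |u a.1 a.2.1 a.2.2 - u b.1 b.2.1 b.2.2| ≤
          L * dist ((a.1, a.2.1) : ℝ × ℝ) ((b.1, b.2.1) : ℝ × ℝ))
    (t₀ ε : ℝ) (hε : 0 < ε) (q p : ℝ → ℝ)
    (hq : ∀ t ∈ Ioo (t₀ - ε) (t₀ + ε), HasDerivAt q (p t) t)
    (hp : ∀ t ∈ Ioo (t₀ - ε) (t₀ + ε), HasDerivAt p
      (u (q t) (p t) t * sin (q t) - cos (q t)) t) :
    (q t₀ = 0 ∧ p t₀ = 0 →
      u (q t₀) (p t₀) t₀ * sin (q t₀) - cos (q t₀) = -1 ∧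
      ∃ δ > 0, ∀ t : ℝ, 0 < |t - t₀| → |t - t₀| ≤ δ → q t < 0) ∧
    (q t₀ = π ∧ p t₀ = 0 →
      u (q t₀) (p t₀) t₀ * sin (q t₀) - cos (q t₀) = 1 ∧
      ∃ δ > 0, ∀ t : ℝ, 0 < |t - t₀| → |t - t₀| ≤ δ → q t > π) := by
  have ht₀ : t₀ ∈ Ioo (t₀ - ε) (t₀ + ε) := ⟨by linarith, by linarith⟩
  constructor
  · rintro ⟨hq0, hp0⟩
    have hval : u (q t₀) (p t₀) t₀ * sin (q t₀) - cos (q t₀) = -1 := by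
      rw [hq0]; simp
    refine ⟨hval, ?_⟩
    have hpd : HasDerivAt p (-1) t₀ := hval ▸ hp t₀ ht₀
    obtain ⟨δ, hδ, h⟩ := pendulum_aux t₀ ε hε q p hq hp0 (-1) (by norm_num) hpd
    exact ⟨δ, hδ, fun t h1 h2 => hq0 ▸ h t h1 h2⟩
  · rintro ⟨hq0, hp0⟩
    have hval : u (q t₀) (p t₀) t₀ * sin (q t₀) - cos (q t₀) = 1 := by
      rw [hq0]; simp
    refine ⟨hval, ?_⟩
    have hpd : HasDerivAt (fun t => -p t) (-1) t₀ := by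
      have := (hval ▸ hp t₀ ht₀).neg
      exact this
    obtain ⟨δ, hδ, h⟩ := pendulum_aux t₀ ε hε (fun t => -q t) (fun t => -p t)
      (fun t ht => (hq t ht).neg) (by simp [hp0]) (-1) (by norm_num) hpd
    refine ⟨δ, hδ, fun t h1 h2 => ?_⟩
    have := h t h1 h2
    simp only [neg_lt_neg_iff] at this
    rw [hq0] at this
    exact this
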